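/- (Second test function in Theorem 2.2) Let (p_n) and (q_n) be sequences with 0 < q_n < p_n ≤ 1 for all n, lim_{n→∞} p_n = 1 and lim_{n→∞} q_n = 1. Then the sequence a_n = sup_{x ≥ 0} | L_n^{p_n,q_n}( (t/(1+t))²; x ) − (x/(1+x))² | converges statistically to 0. -/

import Mathlib

open Finset Filter
open scoped Classical

noncomputable section

/-- The `(p,q)`-integer `[n]_{p,q} = (p^n - q^n)/(p - q)`. -/
def pqInt (p q : ℝ) (n : ℕ) : ℝ := (p ^ n - q ^ n) / (p - q)

/-- The `(p,q)`-factorial. -/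
def pqFact (p q : ℝ) : ℕ → ℝ
  | 0 => 1
  | n + 1 => pqFact p q n * pqInt p q (n + 1)

/-- The `(p,q)`-binomial coefficient. -/
def pqBinom (p q : ℝ) (n k : ℕ) : ℝ :=
  pqFact p q n / (pqFact p q k * pqFact p q (n - k))

/-- `ℓ_n^{p,q}(x) = ∏_{s=0}^{n-1} (p^s + q^s x)`. -/
def pqEll (p q : ℝ) (n : ℕ) (x : ℝ) : ℝ :=
  ∏ s ∈ Finset.range n, (p ^ s + q ^ s * x)

/-- The node `p^{n-k+1}[k]_{p,q} / ([n-k+1]_{p,q} q^k)`. -/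
def pqNode (p q : ℝ) (n k : ℕ) : ℝ :=
  p ^ (n - k + 1) * pqInt p q k / (pqInt p q (n - k + 1) * q ^ k)

/-- The `(p,q)`-Bleimann–Butzer–Hahn operator. -/
def bbh (p q : ℝ) (n : ℕ) (f : ℝ → ℝ) (x : ℝ) : ℝ :=
  (p * q / pqEll p q n x) *
    ∑ k ∈ Finset.range (n + 1),
      f (pqNode p q n k) * p ^ ((n - k) * (n - k - 1) / 2) *
        q ^ (k * (k - 1) / 2) * pqBinom p q n k * x ^ k

/-- `δ_n(x)` from Theorem 3.1. -/
def pqDelta (p q : ℝ) (n : ℕ) (x : ℝ) : ℝ :=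
  (x / (1 + x)) ^ 2 *
      (p ^ 2 * q ^ 3 * pqInt p q n * pqInt p q (n - 1) / (pqInt p q (n + 1)) ^ 2 *
          ((1 + x) / (p + q * x)) -
        2 * p * q * pqInt p q n / pqInt p q (n + 1) + 1) +
    p ^ (n + 2) * q * pqInt p q n / (pqInt p q (n + 1)) ^ 2 * (x / (1 + x))

/-- Statistical convergence of a real sequence. -/
def StatConv (a : ℕ → ℝ) (l : ℝ) : Prop :=
  ∀ ε > (0 : ℝ), Tendsto (fun n : ℕ =>
    (((Finset.range (n + 1)).filter (fun k => ε ≤ |a k - l|)).card : ℝ) / n)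
    atTop (nhds 0)

/-- A modulus of continuity. -/
def IsModulus (ω : ℝ → ℝ) : Prop :=
  (∀ δ, 0 ≤ δ → 0 ≤ ω δ) ∧
  (∀ δ₁ δ₂, 0 ≤ δ₁ → δ₁ ≤ δ₂ → ω δ₁ ≤ ω δ₂) ∧
  (∀ δ₁ δ₂, 0 ≤ δ₁ → 0 ≤ δ₂ → ω (δ₁ + δ₂) ≤ ω δ₁ + ω δ₂) ∧
  Tendsto ω (nhdsWithin 0 (Set.Ioi 0)) (nhds 0)

/-- Membership in the class `H_ω`. -/
def MemHomega (ω f : ℝ → ℝ) : Prop :=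
  ∀ x y : ℝ, 0 ≤ x → 0 ≤ y → |f x - f y| ≤ ω |x / (1 + x) - y / (1 + y)|

/-- The modulus `ω̃(f; δ)`. -/
def omegaTilde (f : ℝ → ℝ) (δ : ℝ) : ℝ :=
  sSup {d | ∃ t x : ℝ, 0 ≤ t ∧ 0 ≤ x ∧ |t / (1 + t) - x / (1 + x)| ≤ δ ∧ d = |f t - f x|}

/-- The bivariate `(p,q)`-Bleimann–Butzer–Hahn operator. -/
def bbh2 (p₁ p₂ q₁ q₂ : ℝ) (n₁ n₂ : ℕ) (f : ℝ → ℝ → ℝ) (x y : ℝ) : ℝ :=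
  (p₁ * p₂ * q₁ * q₂ / (pqEll p₁ q₁ n₁ x * pqEll p₂ q₂ n₂ y)) *
    ∑ k₁ ∈ Finset.range (n₁ + 1), ∑ k₂ ∈ Finset.range (n₂ + 1),
      f (pqNode p₁ q₁ n₁ k₁) (pqNode p₂ q₂ n₂ k₂) *
        p₁ ^ ((n₁ - k₁) * (n₁ - k₁ - 1) / 2) * q₁ ^ (k₁ * (k₁ - 1) / 2) *
        p₂ ^ ((n₂ - k₂) * (n₂ - k₂ - 1) / 2) * q₂ ^ (k₂ * (k₂ - 1) / 2) *
        pqBinom p₁ q₁ n₁ k₁ * pqBinom p₂ q₂ n₂ k₂ * x ^ k₁ * y ^ k₂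

/-- Statistical convergence of a double real sequence (Pringsheim sense). -/
def StatConv2 (a : ℕ → ℕ → ℝ) (l : ℝ) : Prop :=
  ∀ ε > (0 : ℝ), Tendsto (fun N : ℕ × ℕ =>
    ((((Finset.range (N.1 + 1)) ×ˢ (Finset.range (N.2 + 1))).filter
        (fun jk => ε ≤ |a jk.1 jk.2 - l|)).card : ℝ) / (N.1 * N.2))
    atTop (nhds 0)

/-- A bivariate modulus of continuity. -/
def IsModulus2 (ω : ℝ → ℝ → ℝ) : Prop :=
  (∀ a b, 0 ≤ a → 0 ≤ b → 0 ≤ ω a b) ∧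
  (∀ a a' b, 0 ≤ a → a ≤ a' → 0 ≤ b → ω a b ≤ ω a' b) ∧
  (∀ a b b', 0 ≤ a → 0 ≤ b → b ≤ b' → ω a b ≤ ω a b') ∧
  (∀ a a' b, 0 ≤ a → 0 ≤ a' → 0 ≤ b → ω (a + a') b ≤ ω a b + ω a' b) ∧
  (∀ a b b', 0 ≤ a → 0 ≤ b → 0 ≤ b' → ω a (b + b') ≤ ω a b + ω a b') ∧
  Tendsto (fun d : ℝ × ℝ => ω d.1 d.2)
    (nhdsWithin (0, 0) (Set.Ioi 0 ×ˢ Set.Ioi 0)) (nhds 0)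

/-- Membership in the class `H_{ω₂}`. -/
def MemHomega2 (ω g : ℝ → ℝ → ℝ) : Prop :=
  ∀ u₁ v₁ u₂ v₂ : ℝ, 0 ≤ u₁ → 0 ≤ v₁ → 0 ≤ u₂ → 0 ≤ v₂ →
    |g u₁ v₁ - g u₂ v₂| ≤
      ω |u₁ / (1 + u₁) - u₂ / (1 + u₂)| |v₁ / (1 + v₁) - v₂ / (1 + v₂)|

/-- The bivariate modulus `ω̃(g; δ₁, δ₂)`. -/
def omegaTilde2 (g : ℝ → ℝ → ℝ) (δ₁ δ₂ : ℝ) : ℝ :=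
  sSup {d | ∃ t s x y : ℝ, 0 ≤ t ∧ 0 ≤ s ∧ 0 ≤ x ∧ 0 ≤ y ∧
    |t / (1 + t) - x / (1 + x)| ≤ δ₁ ∧ |s / (1 + s) - y / (1 + y)| ≤ δ₂ ∧
    d = |g t s - g x y|}

section Aux
variable {p q : ℝ}

lemma pqInt_zero : pqInt p q 0 = 0 := by simp [pqInt]

lemma pqInt_one (h : q < p) : pqInt p q 1 = 1 := by
  have : p - q ≠ 0 := by linarith
  simp [pqInt, div_self this]

lemma pqInt_add (h : q < p) (a b : ℕ) :
    pqInt p q (a + b) = p ^ a * pqInt p q b + q ^ b * pqInt p q a := by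
  have hpq : p - q ≠ 0 := by linarith
  unfold pqInt
  rw [pow_add, pow_add]
  field_simp
  ring

lemma pqInt_succ (h : q < p) (k : ℕ) : pqInt p q (k + 1) = p ^ k + q * pqInt p q k := by
  have := pqInt_add h k 1
  simpa [pqInt_one h] using this

lemma pqInt_nonneg (hq0 : 0 < q) (hqp : q < p) (k : ℕ) : 0 ≤ pqInt p q k := by
  have hp0 : 0 < p := lt_trans hq0 hqp
  induction k with
  | zero => simp [pqInt_zero]
  | succ n ih =>
    rw [pqInt_succ hqp]
    have := pow_pos hp0 n
    nlinarith

lemma pqInt_pos (hq0 : 0 < q) (hqp : q < p) (k : ℕ) : 0 < pqInt p q (k + 1) := by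
  have hp0 : 0 < p := lt_trans hq0 hqp
  rw [pqInt_succ hqp]
  have := pow_pos hp0 k
  have := pqInt_nonneg hq0 hqp k
  nlinarith

lemma pqFact_pos (hq0 : 0 < q) (hqp : q < p) (n : ℕ) : 0 < pqFact p q n := by
  induction n with
  | zero => norm_num [pqFact]
  | succ n ih => exact mul_pos ih (pqInt_pos hq0 hqp n)

lemma pqBinom_pos (hq0 : 0 < q) (hqp : q < p) (n k : ℕ) : 0 < pqBinom p q n k :=
  div_pos (pqFact_pos hq0 hqp n) (mul_pos (pqFact_pos hq0 hqp k) (pqFact_pos hq0 hqp _))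

lemma pqBinom_zero (hq0 : 0 < q) (hqp : q < p) (n : ℕ) : pqBinom p q n 0 = 1 := by
  have h := (pqFact_pos hq0 hqp n).ne'
  simp [pqBinom, pqFact, div_self h]

lemma pqBinom_self (hq0 : 0 < q) (hqp : q < p) (n : ℕ) : pqBinom p q n n = 1 := by
  have h := (pqFact_pos hq0 hqp n).ne'
  simp [pqBinom, pqFact, div_self h]

lemma pqBinom_absorb (hq0 : 0 < q) (hqp : q < p) (a b : ℕ) :
    pqInt p q (a + 1) * pqBinom p q (a + b + 1) (a + 1) =
      pqInt p q (a + b + 1) * pqBinom p q (a + b) a := by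
  unfold pqBinom
  rw [show a + b + 1 - (a + 1) = b by omega, show a + b - a = b by omega,
    show pqFact p q (a + b + 1) = pqFact p q (a + b) * pqInt p q (a + b + 1) from rfl,
    show pqFact p q (a + 1) = pqFact p q a * pqInt p q (a + 1) from rfl]
  have h1 := (pqFact_pos hq0 hqp a).ne'
  have h2 := (pqFact_pos hq0 hqp b).ne'
  have h3 := (pqFact_pos hq0 hqp (a + b)).ne'
  have h4 := (pqInt_pos hq0 hqp a).ne'
  field_simp

lemma pqBinom_pascal (hq0 : 0 < q) (hqp : q < p) (a b : ℕ) :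
    pqBinom p q (a + b + 2) (a + 1) =
      p ^ (a + 1) * pqBinom p q (a + b + 1) (a + 1) +
        q ^ (b + 1) * pqBinom p q (a + b + 1) a := by
  unfold pqBinom
  rw [show a + b + 2 - (a + 1) = b + 1 by omega, show a + b + 1 - (a + 1) = b by omega,
    show a + b + 1 - a = b + 1 by omega,
    show pqFact p q (a + b + 2) = pqFact p q (a + b + 1) * pqInt p q (a + b + 2) from rfl,
    show pqFact p q (b + 1) = pqFact p q b * pqInt p q (b + 1) from rfl,
    show pqFact p q (a + 1) = pqFact p q a * pqInt p q (a + 1) from rfl,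
    show a + b + 2 = (a + 1) + (b + 1) by omega, pqInt_add hqp (a + 1) (b + 1)]
  have h1 := (pqFact_pos hq0 hqp a).ne'
  have h2 := (pqFact_pos hq0 hqp b).ne'
  have h3 := (pqFact_pos hq0 hqp (a + b + 1)).ne'
  have h4 := (pqInt_pos hq0 hqp a).ne'
  have h5 := (pqInt_pos hq0 hqp b).ne'
  field_simp

lemma tri (d : ℕ) : (d + 1) * d / 2 = d + d * (d - 1) / 2 := by
  rcases d with _ | e
  · rfl
  · simp only [Nat.add_sub_cancel]
    have h1 : (e + 1 + 1) * (e + 1) = 2 * (e + 1) + (e + 1) * e := by ring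
    have h2 : 2 ∣ (e + 1) * e := by
      have := Nat.even_mul_succ_self e
      rw [mul_comm]
      exact this.two_dvd
    omega

end Aux

section Gauss
variable {p q : ℝ}

lemma coefStep (hq0 : 0 < q) (hqp : q < p) (t a b : ℕ) (x : ℝ) :
    p ^ (t * (b + 1) + (b + 1) * b / 2) * q ^ (t * (a + 1) + (a + 1) * a / 2) *
        pqBinom p q (a + b + 1 + 1) (a + 1) * x ^ (a + 1)
    = p ^ (t + (a + b + 1)) *
        (p ^ (t * b + b * (b - 1) / 2) * q ^ (t * (a + 1) + (a + 1) * a / 2) *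
          pqBinom p q (a + b + 1) (a + 1) * x ^ (a + 1)) +
      (p ^ (t * (b + 1) + (b + 1) * b / 2) * q ^ (t * a + a * (a - 1) / 2) *
          pqBinom p q (a + b + 1) a * x ^ a) * (q ^ (t + (a + b + 1)) * x) := by
  rw [show a + b + 1 + 1 = a + b + 2 from rfl, pqBinom_pascal hq0 hqp a b, tri a, tri b]
  ring

lemma gaussGen (hq0 : 0 < q) (hqp : q < p) (t M : ℕ) (x : ℝ) :
    ∑ k ∈ Finset.range (M + 1),
      p ^ (t * (M - k) + (M - k) * (M - k - 1) / 2) * q ^ (t * k + k * (k - 1) / 2) *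
        pqBinom p q M k * x ^ k
    = ∏ s ∈ Finset.range M, (p ^ (s + t) + q ^ (s + t) * x) := by
  induction M with
  | zero => simp [pqBinom_zero hq0 hqp]
  | succ M ih =>
    rw [Finset.prod_range_succ, ← ih]
    rw [Finset.sum_range_succ'
      (fun k => p ^ (t * (M + 1 - k) + (M + 1 - k) * (M + 1 - k - 1) / 2) *
        q ^ (t * k + k * (k - 1) / 2) * pqBinom p q (M + 1) k * x ^ k) (M + 1)]
    rw [Finset.sum_range_succ
      (fun k => p ^ (t * (M + 1 - (k + 1)) + (M + 1 - (k + 1)) * (M + 1 - (k + 1) - 1) / 2) *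
        q ^ (t * (k + 1) + (k + 1) * ((k + 1) - 1) / 2) * pqBinom p q (M + 1) (k + 1) * x ^ (k + 1)) M]
    conv_rhs => rw [mul_add]
    rw [Finset.sum_mul, Finset.sum_mul]
    rw [Finset.sum_range_succ'
      (fun k => p ^ (t * (M - k) + (M - k) * (M - k - 1) / 2) * q ^ (t * k + k * (k - 1) / 2) *
        pqBinom p q M k * x ^ k * p ^ (M + t)) M]
    rw [Finset.sum_range_succ
      (fun k => p ^ (t * (M - k) + (M - k) * (M - k - 1) / 2) * q ^ (t * k + k * (k - 1) / 2) *
        pqBinom p q M k * x ^ k * (q ^ (M + t) * x)) M]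
    have h0 : p ^ (t * (M + 1 - 0) + (M + 1 - 0) * (M + 1 - 0 - 1) / 2) *
        q ^ (t * 0 + 0 * (0 - 1) / 2) * pqBinom p q (M + 1) 0 * x ^ 0
        = p ^ (t * (M - 0) + (M - 0) * (M - 0 - 1) / 2) * q ^ (t * 0 + 0 * (0 - 1) / 2) *
          pqBinom p q M 0 * x ^ 0 * p ^ (M + t) := by
      simp only [Nat.sub_zero, Nat.add_sub_cancel, mul_zero, Nat.zero_mul, pow_zero, mul_one,
        pqBinom_zero hq0 hqp]
      rw [tri M]
      ring
    have htop : p ^ (t * (M + 1 - (M + 1)) + (M + 1 - (M + 1)) * (M + 1 - (M + 1) - 1) / 2) *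
        q ^ (t * (M + 1) + (M + 1) * ((M + 1) - 1) / 2) * pqBinom p q (M + 1) (M + 1) * x ^ (M + 1)
        = p ^ (t * (M - M) + (M - M) * (M - M - 1) / 2) * q ^ (t * M + M * (M - 1) / 2) *
          pqBinom p q M M * x ^ M * (q ^ (M + t) * x) := by
      simp only [Nat.sub_self, Nat.add_sub_cancel, mul_zero, Nat.zero_mul, pow_zero, one_mul,
        pqBinom_self hq0 hqp, mul_one]
      rw [tri M]
      ring
    have hmid : ∀ k ∈ Finset.range M,
        p ^ (t * (M + 1 - (k + 1)) + (M + 1 - (k + 1)) * (M + 1 - (k + 1) - 1) / 2) *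
          q ^ (t * (k + 1) + (k + 1) * ((k + 1) - 1) / 2) * pqBinom p q (M + 1) (k + 1) * x ^ (k + 1)
        = p ^ (t * (M - (k + 1)) + (M - (k + 1)) * (M - (k + 1) - 1) / 2) *
            q ^ (t * (k + 1) + (k + 1) * ((k + 1) - 1) / 2) * pqBinom p q M (k + 1) * x ^ (k + 1) *
            p ^ (M + t) +
          p ^ (t * (M - k) + (M - k) * (M - k - 1) / 2) * q ^ (t * k + k * (k - 1) / 2) *
            pqBinom p q M k * x ^ k * (q ^ (M + t) * x) := by
      intro k hk
      rw [Finset.mem_range] at hk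
      obtain ⟨b, rfl⟩ : ∃ b, M = k + b + 1 := ⟨M - k - 1, by omega⟩
      rw [show k + b + 1 + 1 - (k + 1) = b + 1 by omega,
        show k + b + 1 - (k + 1) = b by omega,
        show k + b + 1 - k = b + 1 by omega,
        show (k + 1) - 1 = k from rfl, show (b + 1) - 1 = b from rfl]
      have hc := coefStep hq0 hqp t k b x
      linear_combination hc
    rw [Finset.sum_congr rfl hmid, Finset.sum_add_distrib, h0, htop]
    ring

section Moment
variable {p q : ℝ}

lemma node_ratio (hq0 : 0 < q) (hqp : q < p) (n k : ℕ) (hk : k ≤ n) :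
    pqNode p q n k / (1 + pqNode p q n k) =
      p ^ (n - k + 1) * pqInt p q k / pqInt p q (n + 1) := by
  have hp0 : 0 < p := lt_trans hq0 hqp
  unfold pqNode
  have hsum : pqInt p q (n + 1) = p ^ (n - k + 1) * pqInt p q k + q ^ k * pqInt p q (n - k + 1) := by
    rw [show n + 1 = (n - k + 1) + k by omega, pqInt_add hqp]
  rw [hsum]
  have hB : (0:ℝ) < pqInt p q (n - k + 1) * q ^ k :=
    mul_pos (pqInt_pos hq0 hqp _) (pow_pos hq0 k)
  have hA : (0:ℝ) ≤ p ^ (n - k + 1) * pqInt p q k :=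
    mul_nonneg (pow_pos hp0 _).le (pqInt_nonneg hq0 hqp k)
  have hAB : (0:ℝ) < p ^ (n - k + 1) * pqInt p q k + q ^ k * pqInt p q (n - k + 1) := by
    have : (0:ℝ) < q ^ k * pqInt p q (n - k + 1) := by
      rw [mul_comm]; exact mul_pos (pqInt_pos hq0 hqp _) (pow_pos hq0 k)
    linarith
  have h1 : (1:ℝ) + p ^ (n - k + 1) * pqInt p q k / (pqInt p q (n - k + 1) * q ^ k)
      = (p ^ (n - k + 1) * pqInt p q k + q ^ k * pqInt p q (n - k + 1)) /
          (pqInt p q (n - k + 1) * q ^ k) := by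
    rw [one_add_div hB.ne']
    ring
  rw [h1, div_div_div_cancel_right₀]
  exact hB.ne'

lemma ell_split1 (m : ℕ) (x : ℝ) :
    pqEll p q (m + 2) x = (1 + x) * ∏ s ∈ Finset.range (m + 1), (p ^ (s + 1) + q ^ (s + 1) * x) := by
  unfold pqEll
  rw [Finset.prod_range_succ' (fun s => p ^ s + q ^ s * x) (m + 1)]
  simp [mul_comm]

lemma ell_split2 (m : ℕ) (x : ℝ) :
    (∏ s ∈ Finset.range (m + 1), (p ^ (s + 1) + q ^ (s + 1) * x)) =
      (p + q * x) * ∏ s ∈ Finset.range m, (p ^ (s + 2) + q ^ (s + 2) * x) := by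
  rw [Finset.prod_range_succ' (fun s => p ^ (s + 1) + q ^ (s + 1) * x) m]
  simp only [show ∀ s : ℕ, s + 1 + 1 = s + 2 from fun _ => rfl, zero_add, pow_one]
  rw [mul_comm]

end Moment

section SumE2
variable {p q : ℝ}

lemma sumE2 (hq0 : 0 < q) (hqp : q < p) (m : ℕ) (x : ℝ) :
    ∑ k ∈ Finset.range (m + 2 + 1),
      (p ^ (m + 2 - k + 1) * pqInt p q k) ^ 2 *
        (p ^ ((m + 2 - k) * (m + 2 - k - 1) / 2) * q ^ (k * (k - 1) / 2) *
          pqBinom p q (m + 2) k * x ^ k)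
    = pqInt p q (m + 2) * p ^ (m + 3) * x *
        (∏ s ∈ Finset.range (m + 1), (p ^ (s + 1) + q ^ (s + 1) * x)) +
      pqInt p q (m + 2) * pqInt p q (m + 1) * p ^ 2 * q ^ 2 * x ^ 2 *
        (∏ s ∈ Finset.range m, (p ^ (s + 2) + q ^ (s + 2) * x)) := by
  rw [Finset.sum_range_succ' (fun k =>
    (p ^ (m + 2 - k + 1) * pqInt p q k) ^ 2 *
      (p ^ ((m + 2 - k) * (m + 2 - k - 1) / 2) * q ^ (k * (k - 1) / 2) *
        pqBinom p q (m + 2) k * x ^ k)) (m + 2)]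
  have hz : (p ^ (m + 2 - 0 + 1) * pqInt p q 0) ^ 2 *
      (p ^ ((m + 2 - 0) * (m + 2 - 0 - 1) / 2) * q ^ (0 * (0 - 1) / 2) *
        pqBinom p q (m + 2) 0 * x ^ 0) = 0 := by
    simp [pqInt_zero]
  rw [hz, add_zero]
  have hstep : ∀ j ∈ Finset.range (m + 2),
      (p ^ (m + 2 - (j + 1) + 1) * pqInt p q (j + 1)) ^ 2 *
        (p ^ ((m + 2 - (j + 1)) * (m + 2 - (j + 1) - 1) / 2) *
          q ^ ((j + 1) * ((j + 1) - 1) / 2) * pqBinom p q (m + 2) (j + 1) * x ^ (j + 1))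
      = pqInt p q (m + 2) * p ^ (m + 3) * x *
          (p ^ (1 * (m + 1 - j) + (m + 1 - j) * (m + 1 - j - 1) / 2) *
            q ^ (1 * j + j * (j - 1) / 2) * pqBinom p q (m + 1) j * x ^ j) +
        pqInt p q (m + 2) * q * pqInt p q j *
          (p ^ (2 * (m + 2 - j) + (m + 1 - j) * (m + 1 - j - 1) / 2) *
            q ^ (j + j * (j - 1) / 2) * pqBinom p q (m + 1) j * x ^ (j + 1)) := by
    intro j hj
    rw [Finset.mem_range] at hj
    have habs := pqBinom_absorb hq0 hqp j (m + 1 - j)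
    rw [show j + (m + 1 - j) + 1 = m + 2 by omega, show j + (m + 1 - j) = m + 1 by omega] at habs
    have hsucc := pqInt_succ hqp j
    have key : pqInt p q (j + 1) ^ 2 * pqBinom p q (m + 2) (j + 1)
        = (p ^ j + q * pqInt p q j) * (pqInt p q (m + 2) * pqBinom p q (m + 1) j) := by
      rw [pow_two, mul_assoc, habs, hsucc]
    rw [show m + 2 - (j + 1) + 1 = (m + 1 - j) + 1 by omega,
      show m + 2 - (j + 1) = m + 1 - j by omega,
      show (j + 1) - 1 = j from rfl, tri j,
      show m + 2 - j = (m + 1 - j) + 1 by omega,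
      show m + 3 = (m + 1 - j) + j + 2 by omega]
    linear_combination (p ^ ((m + 1 - j) + 1)) ^ 2 * p ^ ((m + 1 - j) * (m + 1 - j - 1) / 2) *
      q ^ (j + j * (j - 1) / 2) * x ^ (j + 1) * key
  rw [Finset.sum_congr rfl hstep, Finset.sum_add_distrib]
  congr 1
  · -- first sum: pull constants and apply gaussGen t = 1, M = m+1
    rw [← Finset.mul_sum]
    rw [gaussGen hq0 hqp 1 (m + 1) x]
  · -- second sum
    rw [Finset.sum_range_succ' (fun j =>
      pqInt p q (m + 2) * q * pqInt p q j *
        (p ^ (2 * (m + 2 - j) + (m + 1 - j) * (m + 1 - j - 1) / 2) *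
          q ^ (j + j * (j - 1) / 2) * pqBinom p q (m + 1) j * x ^ (j + 1))) (m + 1)]
    have hz2 : pqInt p q (m + 2) * q * pqInt p q 0 *
        (p ^ (2 * (m + 2 - 0) + (m + 1 - 0) * (m + 1 - 0 - 1) / 2) *
          q ^ (0 + 0 * (0 - 1) / 2) * pqBinom p q (m + 1) 0 * x ^ (0 + 1)) = 0 := by
      simp [pqInt_zero]
    rw [hz2, add_zero]
    have hstep2 : ∀ i ∈ Finset.range (m + 1),
        pqInt p q (m + 2) * q * pqInt p q (i + 1) *
          (p ^ (2 * (m + 2 - (i + 1)) + (m + 1 - (i + 1)) * (m + 1 - (i + 1) - 1) / 2) *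
            q ^ ((i + 1) + (i + 1) * ((i + 1) - 1) / 2) * pqBinom p q (m + 1) (i + 1) *
              x ^ ((i + 1) + 1))
        = pqInt p q (m + 2) * pqInt p q (m + 1) * p ^ 2 * q ^ 2 * x ^ 2 *
            (p ^ (2 * (m - i) + (m - i) * (m - i - 1) / 2) * q ^ (2 * i + i * (i - 1) / 2) *
              pqBinom p q m i * x ^ i) := by
      intro i hi
      rw [Finset.mem_range] at hi
      have habs := pqBinom_absorb hq0 hqp i (m - i)
      rw [show i + (m - i) + 1 = m + 1 by omega, show i + (m - i) = m by omega] at habs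
      rw [show m + 2 - (i + 1) = (m - i) + 1 by omega,
        show m + 1 - (i + 1) = m - i by omega,
        show (i + 1) - 1 = i from rfl, tri i]
      linear_combination pqInt p q (m + 2) * q * p ^ (2 * ((m - i) + 1) + (m - i) * (m - i - 1) / 2) *
        q ^ ((i + 1) + (i + i * (i - 1) / 2)) * x ^ (i + 1 + 1) * habs
    rw [Finset.sum_congr rfl hstep2]
    rw [← Finset.mul_sum]
    rw [gaussGen hq0 hqp 2 m x]

end SumE2

section BBHE2
variable {p q : ℝ}

lemma bbh_e2_eq (hq0 : 0 < q) (hqp : q < p) (m : ℕ) (x : ℝ) (hx : 0 ≤ x) :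
    bbh p q (m + 2) (fun t => (t / (1 + t)) ^ 2) x
    = (p ^ (m + 4) * q * pqInt p q (m + 2) / (pqInt p q (m + 3)) ^ 2) * (x / (1 + x)) +
      (p ^ 3 * q ^ 3 * pqInt p q (m + 2) * pqInt p q (m + 1) / (pqInt p q (m + 3)) ^ 2) *
        (x ^ 2 / ((1 + x) * (p + q * x))) := by
  have hp0 : 0 < p := lt_trans hq0 hqp
  unfold bbh
  have hterm : ∀ k ∈ Finset.range (m + 2 + 1),
      (fun t => (t / (1 + t)) ^ 2) (pqNode p q (m + 2) k) *
          p ^ ((m + 2 - k) * (m + 2 - k - 1) / 2) * q ^ (k * (k - 1) / 2) *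
          pqBinom p q (m + 2) k * x ^ k
      = ((p ^ (m + 2 - k + 1) * pqInt p q k) ^ 2 *
          (p ^ ((m + 2 - k) * (m + 2 - k - 1) / 2) * q ^ (k * (k - 1) / 2) *
            pqBinom p q (m + 2) k * x ^ k)) / (pqInt p q (m + 3)) ^ 2 := by
    intro k hk
    rw [Finset.mem_range] at hk
    have hnr := node_ratio hq0 hqp (m + 2) k (by omega)
    rw [show m + 2 + 1 = m + 3 from rfl] at hnr
    show (pqNode p q (m + 2) k / (1 + pqNode p q (m + 2) k)) ^ 2 * _ * _ * _ * _ = _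
    rw [hnr, div_pow]
    ring
  rw [Finset.sum_congr rfl hterm, ← Finset.sum_div, sumE2 hq0 hqp m x,
    ell_split1 m x, ell_split2 m x]
  have h1x : (0:ℝ) < 1 + x := by linarith
  have hpqx : (0:ℝ) < p + q * x := by positivity
  have hP2 : (0:ℝ) < ∏ s ∈ Finset.range m, (p ^ (s + 2) + q ^ (s + 2) * x) :=
    Finset.prod_pos fun s _ => by positivity
  have hI3 : (0:ℝ) < pqInt p q (m + 3) := pqInt_pos hq0 hqp (m + 2)
  field_simp
  ring

end BBHE2

section Bound
variable {p q : ℝ}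

lemma c1_le_one (hq0 : 0 < q) (hqp : q < p) (hp1 : p ≤ 1) (m : ℕ) :
    p ^ 3 * q ^ 3 * pqInt p q (m + 2) * pqInt p q (m + 1) / (pqInt p q (m + 3)) ^ 2 ≤ 1 := by
  have hp0 : 0 < p := lt_trans hq0 hqp
  have hI1 : (0:ℝ) < pqInt p q (m + 1) := pqInt_pos hq0 hqp m
  have hI2 : (0:ℝ) < pqInt p q (m + 2) := pqInt_pos hq0 hqp (m + 1)
  have hI3 : (0:ℝ) < pqInt p q (m + 3) := pqInt_pos hq0 hqp (m + 2)
  have h1 : q * pqInt p q (m + 1) ≤ pqInt p q (m + 2) := by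
    rw [pqInt_succ hqp (m + 1)]
    have := pow_pos hp0 (m + 1)
    linarith
  have h2 : q * pqInt p q (m + 2) ≤ pqInt p q (m + 3) := by
    rw [pqInt_succ hqp (m + 2)]
    have := pow_pos hp0 (m + 2)
    linarith
  rw [div_le_one (pow_pos hI3 2)]
  have hp3 : p ^ 3 ≤ 1 := pow_le_one₀ hp0.le hp1
  have hA : (q * pqInt p q (m + 1)) * (q * pqInt p q (m + 2)) ≤
      pqInt p q (m + 2) * pqInt p q (m + 3) :=
    mul_le_mul h1 h2 (mul_nonneg hq0.le hI2.le) hI2.le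
  have f1 : q * ((q * pqInt p q (m + 1)) * (q * pqInt p q (m + 2))) ≤
      q * (pqInt p q (m + 2) * pqInt p q (m + 3)) := mul_le_mul_of_nonneg_left hA hq0.le
  have hB : q * (pqInt p q (m + 2) * pqInt p q (m + 3)) ≤
      pqInt p q (m + 3) * pqInt p q (m + 3) := by
    calc q * (pqInt p q (m + 2) * pqInt p q (m + 3))
        = (q * pqInt p q (m + 2)) * pqInt p q (m + 3) := by ring
      _ ≤ pqInt p q (m + 3) * pqInt p q (m + 3) := mul_le_mul_of_nonneg_right h2 hI3.le
  have hnum : (0:ℝ) ≤ q ^ 3 * pqInt p q (m + 1) * pqInt p q (m + 2) := by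
    have := mul_nonneg (mul_nonneg (pow_nonneg hq0.le 3) hI1.le) hI2.le
    exact this
  have f3 : p ^ 3 * (q ^ 3 * pqInt p q (m + 1) * pqInt p q (m + 2)) ≤
      1 * (q ^ 3 * pqInt p q (m + 1) * pqInt p q (m + 2)) :=
    mul_le_mul_of_nonneg_right hp3 hnum
  nlinarith [f1, hB, f3]

lemma bbh_e2_bound (hq0 : 0 < q) (hqp : q < p) (hp1 : p ≤ 1) (m : ℕ) (x : ℝ) (hx : 0 ≤ x) :
    |bbh p q (m + 2) (fun t => (t / (1 + t)) ^ 2) x - (x / (1 + x)) ^ 2|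
      ≤ (1 - p ^ 3 * q ^ 3 * pqInt p q (m + 2) * pqInt p q (m + 1) / (pqInt p q (m + 3)) ^ 2) +
        (p ^ 3 * q ^ 3 * pqInt p q (m + 2) * pqInt p q (m + 1) / (pqInt p q (m + 3)) ^ 2 / q -
          p ^ 3 * q ^ 3 * pqInt p q (m + 2) * pqInt p q (m + 1) / (pqInt p q (m + 3)) ^ 2) +
        p ^ (m + 4) * q * pqInt p q (m + 2) / (pqInt p q (m + 3)) ^ 2 := by
  have hp0 : 0 < p := lt_trans hq0 hqp
  have hq1 : q ≤ 1 := le_trans hqp.le hp1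
  rw [bbh_e2_eq hq0 hqp m x hx]
  have hI1 : (0:ℝ) < pqInt p q (m + 1) := pqInt_pos hq0 hqp m
  have hI2 : (0:ℝ) < pqInt p q (m + 2) := pqInt_pos hq0 hqp (m + 1)
  have hI3 : (0:ℝ) < pqInt p q (m + 3) := pqInt_pos hq0 hqp (m + 2)
  have hc1le : p ^ 3 * q ^ 3 * pqInt p q (m + 2) * pqInt p q (m + 1) / (pqInt p q (m + 3)) ^ 2 ≤ 1 :=
    c1_le_one hq0 hqp hp1 m
  have hc1n : (0:ℝ) ≤
      p ^ 3 * q ^ 3 * pqInt p q (m + 2) * pqInt p q (m + 1) / (pqInt p q (m + 3)) ^ 2 :=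
    div_nonneg (by positivity) (sq_nonneg _)
  have hc2n : (0:ℝ) ≤ p ^ (m + 4) * q * pqInt p q (m + 2) / (pqInt p q (m + 3)) ^ 2 :=
    div_nonneg (by positivity) (sq_nonneg _)
  set c1 : ℝ := p ^ 3 * q ^ 3 * pqInt p q (m + 2) * pqInt p q (m + 1) / (pqInt p q (m + 3)) ^ 2
    with hc1def
  set c2 : ℝ := p ^ (m + 4) * q * pqInt p q (m + 2) / (pqInt p q (m + 3)) ^ 2 with hc2def
  set u : ℝ := x / (1 + x) with hudef
  set A : ℝ := x ^ 2 / ((1 + x) * (p + q * x)) with hAdef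
  have h1x : (0:ℝ) < 1 + x := by linarith
  have hpqx : (0:ℝ) < p + q * x := by positivity
  have hu0 : 0 ≤ u := by rw [hudef]; positivity
  have hu1 : u ≤ 1 := by rw [hudef, div_le_one h1x]; linarith
  have hueq : u ^ 2 = x ^ 2 / ((1 + x) * (1 + x)) := by
    rw [hudef, div_pow]
    congr 1
    ring
  have hA1 : u ^ 2 ≤ A := by
    rw [hueq, hAdef, div_le_div_iff₀ (by positivity) (by positivity)]
    nlinarith [mul_nonneg (mul_nonneg (sq_nonneg x) h1x.le)
      (show (0:ℝ) ≤ 1 - p + x * (1 - q) by nlinarith)]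
  have hA2 : A * q ≤ u ^ 2 := by
    rw [hueq, hAdef, div_mul_eq_mul_div, div_le_div_iff₀ (by positivity) (by positivity)]
    nlinarith [mul_nonneg (mul_nonneg (sq_nonneg x) h1x.le) (show (0:ℝ) ≤ p - q by linarith)]
  have hA2' : A ≤ u ^ 2 / q := (le_div_iff₀ hq0).mpr hA2
  have hk1 : c1 * u ^ 2 ≤ c1 * A := mul_le_mul_of_nonneg_left hA1 hc1n
  have hk3 : c1 ≤ c1 / q := by
    rw [le_div_iff₀ hq0]
    nlinarith
  have hk4 : c1 * A ≤ c1 / q * u ^ 2 := by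
    calc c1 * A ≤ c1 * (u ^ 2 / q) := mul_le_mul_of_nonneg_left hA2' hc1n
      _ = c1 / q * u ^ 2 := by ring
  set D : ℝ := c1 / q with hDdef
  clear_value c1 c2 u A D
  clear hueq hA1 hA2 hA2' hudef hAdef hc1def hc2def hDdef
  have hu2 : u ^ 2 ≤ 1 := by nlinarith [hu0, hu1]
  rw [abs_le]
  constructor
  · nlinarith [mul_nonneg hc2n hu0, mul_nonneg (sub_nonneg.mpr hc1le) (sub_nonneg.mpr hu2)]
  · nlinarith [mul_nonneg hc2n (sub_nonneg.mpr hu1),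
      mul_nonneg (sub_nonneg.mpr hk3) (sub_nonneg.mpr hu2),
      mul_nonneg (sub_nonneg.mpr hc1le) (sq_nonneg u)]

end Bound

section Limit

lemma pqInt_eq_sum {p q : ℝ} (hqp : q < p) (N : ℕ) :
    pqInt p q N = ∑ i ∈ Finset.range N, p ^ i * q ^ (N - 1 - i) := by
  have h : p - q ≠ 0 := by linarith
  rw [pqInt, ← geom_sum₂_mul p q N, mul_div_assoc, div_self h, mul_one]

lemma pqInt_lb {p q : ℝ} (hq0 : 0 < q) (hqp : q < p) (hp1 : p ≤ 1)
    (m N : ℕ) (hm : 1 ≤ m) (hmN : m ≤ N) :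
    (m : ℝ) * (p ^ (N - 1) * q ^ (m - 1)) ≤ pqInt p q N := by
  have hp0 : 0 < p := lt_trans hq0 hqp
  have hq1 : q ≤ 1 := le_trans hqp.le hp1
  rw [pqInt_eq_sum hqp N]
  have hsub : Finset.Ico (N - m) N ⊆ Finset.range N := by
    intro i hi
    rw [Finset.mem_Ico] at hi
    rw [Finset.mem_range]
    omega
  have h1 : ∑ i ∈ Finset.Ico (N - m) N, p ^ (N - 1) * q ^ (m - 1) ≤
      ∑ i ∈ Finset.Ico (N - m) N, p ^ i * q ^ (N - 1 - i) := by
    apply Finset.sum_le_sum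
    intro i hi
    rw [Finset.mem_Ico] at hi
    have e1 : p ^ (N - 1) ≤ p ^ i := pow_le_pow_of_le_one hp0.le hp1 (by omega)
    have e2 : q ^ (m - 1) ≤ q ^ (N - 1 - i) := pow_le_pow_of_le_one hq0.le hq1 (by omega)
    exact mul_le_mul e1 e2 (pow_nonneg hq0.le _) (pow_nonneg hp0.le _)
  have h2 : ∑ i ∈ Finset.Ico (N - m) N, p ^ i * q ^ (N - 1 - i) ≤
      ∑ i ∈ Finset.range N, p ^ i * q ^ (N - 1 - i) := by
    apply Finset.sum_le_sum_of_subset_of_nonneg hsub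
    intro i _ _
    positivity
  have h3 : ∑ i ∈ Finset.Ico (N - m) N, p ^ (N - 1) * q ^ (m - 1) =
      (m : ℝ) * (p ^ (N - 1) * q ^ (m - 1)) := by
    rw [Finset.sum_const, Nat.card_Ico, nsmul_eq_mul]
    congr 2
    omega
  linarith [h1, h2, h3.symm.le]

lemma tendsto_ratio (p q : ℕ → ℝ)
    (hq : ∀ n, 0 < q n) (hqp : ∀ n, q n < p n) (hp : ∀ n, p n ≤ 1)
    (hql : Filter.Tendsto q Filter.atTop (nhds 1))
    (φ : ℕ → ℕ) (hφ : Filter.Tendsto φ Filter.atTop Filter.atTop) :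
    Filter.Tendsto (fun n => (p n) ^ (φ n) / pqInt (p n) (q n) (φ n))
      Filter.atTop (nhds 0) := by
  rw [Metric.tendsto_atTop]
  intro ε hε
  obtain ⟨m, hm⟩ := exists_nat_gt (2 / ε)
  have hm1 : 1 ≤ m := by
    have : (0:ℝ) < 2 / ε := by positivity
    have : (0:ℝ) < (m:ℝ) := lt_trans this hm
    exact_mod_cast Nat.one_le_iff_ne_zero.mpr (by exact_mod_cast this.ne')
  have h2m : 2 / (m:ℝ) < ε := by
    rw [div_lt_iff₀ (by exact_mod_cast Nat.pos_of_ne_zero (by omega))]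
    rw [div_lt_iff₀ hε] at hm
    linarith [hm]
  have hq1 : ∀ n, q n ≤ 1 := fun n => le_trans (hqp n).le (hp n)
  have hpow : Filter.Tendsto (fun n => (q n) ^ (m - 1)) Filter.atTop (nhds 1) := by
    have := hql.pow (m - 1)
    simpa using this
  have hev1 : ∀ᶠ n in Filter.atTop, (1:ℝ) / 2 < (q n) ^ (m - 1) :=
    hpow.eventually (eventually_gt_nhds (by norm_num))
  have hev2 : ∀ᶠ n in Filter.atTop, m ≤ φ n := hφ.eventually_ge_atTop m
  obtain ⟨N, hN⟩ := (hev1.and hev2).exists_forall_of_atTop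
  refine ⟨N, fun n hn => ?_⟩
  obtain ⟨hq2, hmφ⟩ := hN n hn
  have hp0 : 0 < p n := lt_trans (hq n) (hqp n)
  have hφ1 : 1 ≤ φ n := le_trans hm1 hmφ
  have hIpos : 0 < pqInt (p n) (q n) (φ n) := by
    have := pqInt_pos (hq n) (hqp n) (φ n - 1)
    rwa [show φ n - 1 + 1 = φ n by omega] at this
  have hlb := pqInt_lb (hq n) (hqp n) (hp n) m (φ n) hm1 hmφ
  have hDpos : (0:ℝ) < (m:ℝ) * ((p n) ^ (φ n - 1) * (q n) ^ (m - 1)) := by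
    have : (0:ℝ) < (m:ℝ) := by exact_mod_cast by omega
    positivity
  rw [Real.dist_eq, sub_zero, abs_of_nonneg (by positivity)]
  have step1 : (p n) ^ (φ n) / pqInt (p n) (q n) (φ n) ≤
      (p n) ^ (φ n) / ((m:ℝ) * ((p n) ^ (φ n - 1) * (q n) ^ (m - 1))) := by
    gcongr
  have hppow : (p n) ^ (φ n) ≤ (p n) ^ (φ n - 1) :=
    pow_le_pow_of_le_one hp0.le (hp n) (by omega)
  have step2 : (p n) ^ (φ n) / ((m:ℝ) * ((p n) ^ (φ n - 1) * (q n) ^ (m - 1))) ≤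
      (p n) ^ (φ n - 1) / ((m:ℝ) * ((p n) ^ (φ n - 1) * (q n) ^ (m - 1))) := by
    gcongr
  have step3 : (p n) ^ (φ n - 1) / ((m:ℝ) * ((p n) ^ (φ n - 1) * (q n) ^ (m - 1))) =
      1 / ((m:ℝ) * (q n) ^ (m - 1)) := by
    have h1 : (p n) ^ (φ n - 1) ≠ 0 := (pow_pos hp0 _).ne'
    have h2 : (m:ℝ) ≠ 0 := by exact_mod_cast by omega
    have h3 : (q n) ^ (m - 1) ≠ 0 := (pow_pos (hq n) _).ne'
    field_simp
  have step4 : 1 / ((m:ℝ) * (q n) ^ (m - 1)) < ε := by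
    have hm0 : (0:ℝ) < (m:ℝ) := by exact_mod_cast by omega
    have hd : (m:ℝ) / 2 < (m:ℝ) * (q n) ^ (m - 1) := by nlinarith
    have hd0 : (0:ℝ) < (m:ℝ) / 2 := by positivity
    calc 1 / ((m:ℝ) * (q n) ^ (m - 1)) < 1 / ((m:ℝ) / 2) := by
          apply one_div_lt_one_div_of_lt hd0 hd
      _ = 2 / (m:ℝ) := by field_simp
      _ < ε := h2m
  calc (p n) ^ (φ n) / pqInt (p n) (q n) (φ n)
      ≤ (p n) ^ (φ n) / ((m:ℝ) * ((p n) ^ (φ n - 1) * (q n) ^ (m - 1))) := step1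
    _ ≤ (p n) ^ (φ n - 1) / ((m:ℝ) * ((p n) ^ (φ n - 1) * (q n) ^ (m - 1))) := step2
    _ = 1 / ((m:ℝ) * (q n) ^ (m - 1)) := step3
    _ < ε := step4

end Limit

section Convert
variable {p q : ℝ}

lemma c1_eq (hq0 : 0 < q) (hqp : q < p) (m : ℕ) :
    p ^ 3 * q ^ 3 * pqInt p q (m + 2) * pqInt p q (m + 1) / (pqInt p q (m + 3)) ^ 2
    = p ^ 3 * q ^ 3 /
        ((p ^ (m + 1) / pqInt p q (m + 1) + q) * (p ^ (m + 2) / pqInt p q (m + 2) + q) ^ 2) := by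
  have hp0 : 0 < p := lt_trans hq0 hqp
  have hI1 : (0:ℝ) < pqInt p q (m + 1) := pqInt_pos hq0 hqp m
  have hI2 : (0:ℝ) < pqInt p q (m + 2) := pqInt_pos hq0 hqp (m + 1)
  have hd1 : (0:ℝ) < p ^ (m + 1) / pqInt p q (m + 1) + q := by positivity
  have hd2 : (0:ℝ) < p ^ (m + 2) / pqInt p q (m + 2) + q := by positivity
  rw [show pqInt p q (m + 3) = p ^ (m + 2) + q * pqInt p q (m + 2) from pqInt_succ hqp (m + 2),
    show pqInt p q (m + 2) = p ^ (m + 1) + q * pqInt p q (m + 1) from pqInt_succ hqp (m + 1)]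
  have hI2' : (0:ℝ) < p ^ (m + 1) + q * pqInt p q (m + 1) := by positivity
  have hd2' : (0:ℝ) < p ^ (m + 2) / (p ^ (m + 1) + q * pqInt p q (m + 1)) + q := by positivity
  field_simp

lemma c2_eq (hq0 : 0 < q) (hqp : q < p) (m : ℕ) :
    p ^ (m + 4) * q * pqInt p q (m + 2) / (pqInt p q (m + 3)) ^ 2
    = p ^ 2 * q * (p ^ (m + 2) / pqInt p q (m + 2)) /
        (p ^ (m + 2) / pqInt p q (m + 2) + q) ^ 2 := by
  have hp0 : 0 < p := lt_trans hq0 hqp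
  have hI2 : (0:ℝ) < pqInt p q (m + 2) := pqInt_pos hq0 hqp (m + 1)
  have hd2 : (0:ℝ) < p ^ (m + 2) / pqInt p q (m + 2) + q := by positivity
  rw [show pqInt p q (m + 3) = p ^ (m + 2) + q * pqInt p q (m + 2) from pqInt_succ hqp (m + 2)]
  have hI3' : (0:ℝ) < p ^ (m + 2) + q * pqInt p q (m + 2) := by positivity
  field_simp
  ring

end Convert

section Main

lemma tendsto_a_zero (p q : ℕ → ℝ)
    (hq : ∀ n, 0 < q n) (hqp : ∀ n, q n < p n) (hp : ∀ n, p n ≤ 1)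
    (hpl : Filter.Tendsto p Filter.atTop (nhds 1))
    (hql : Filter.Tendsto q Filter.atTop (nhds 1)) :
    Filter.Tendsto (fun n : ℕ =>
      ⨆ x : {t : ℝ // 0 ≤ t},
        |bbh (p n) (q n) n (fun t => (t / (1 + t)) ^ 2) x.1 -
          (x.1 / (1 + x.1)) ^ 2|) Filter.atTop (nhds 0) := by
  haveI : Nonempty {t : ℝ // 0 ≤ t} := ⟨⟨0, le_rfl⟩⟩
  have hr : Filter.Tendsto (fun n => (p n) ^ n / pqInt (p n) (q n) n)
      Filter.atTop (nhds 0) :=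
    tendsto_ratio p q hq hqp hp hql (fun n => n) Filter.tendsto_id
  have hr' : Filter.Tendsto (fun n => (p n) ^ (n - 1) / pqInt (p n) (q n) (n - 1))
      Filter.atTop (nhds 0) :=
    tendsto_ratio p q hq hqp hp hql (fun n => n - 1)
      (Filter.tendsto_atTop_atTop.mpr fun b => ⟨b + 1, fun a ha => by omega⟩)
  have hrq : Filter.Tendsto (fun n => (p n) ^ n / pqInt (p n) (q n) n + q n)
      Filter.atTop (nhds 1) := by
    have := hr.add hql; simpa using this
  have hr'q : Filter.Tendsto (fun n => (p n) ^ (n - 1) / pqInt (p n) (q n) (n - 1) + q n)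
      Filter.atTop (nhds 1) := by
    have := hr'.add hql; simpa using this
  have hC : Filter.Tendsto (fun n => (p n) ^ 3 * (q n) ^ 3 /
      (((p n) ^ (n - 1) / pqInt (p n) (q n) (n - 1) + q n) *
        ((p n) ^ n / pqInt (p n) (q n) n + q n) ^ 2)) Filter.atTop (nhds 1) := by
    have h1 := (hpl.pow 3).mul (hql.pow 3)
    have h2 := hr'q.mul (hrq.pow 2)
    have := h1.div h2 (by norm_num)
    convert this using 2 <;> norm_num
  have hc2s : Filter.Tendsto (fun n => (p n) ^ 2 * q n * ((p n) ^ n / pqInt (p n) (q n) n) /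
      ((p n) ^ n / pqInt (p n) (q n) n + q n) ^ 2) Filter.atTop (nhds 0) := by
    have h1 := ((hpl.pow 2).mul hql).mul hr
    have := h1.div (hrq.pow 2) (by norm_num)
    convert this using 2 <;> norm_num
  have hβ : Filter.Tendsto (fun n =>
      (1 - (p n) ^ 3 * (q n) ^ 3 /
        (((p n) ^ (n - 1) / pqInt (p n) (q n) (n - 1) + q n) *
          ((p n) ^ n / pqInt (p n) (q n) n + q n) ^ 2)) +
      ((p n) ^ 3 * (q n) ^ 3 /
        (((p n) ^ (n - 1) / pqInt (p n) (q n) (n - 1) + q n) *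
          ((p n) ^ n / pqInt (p n) (q n) n + q n) ^ 2) / q n -
        (p n) ^ 3 * (q n) ^ 3 /
        (((p n) ^ (n - 1) / pqInt (p n) (q n) (n - 1) + q n) *
          ((p n) ^ n / pqInt (p n) (q n) n + q n) ^ 2)) +
      (p n) ^ 2 * q n * ((p n) ^ n / pqInt (p n) (q n) n) /
        ((p n) ^ n / pqInt (p n) (q n) n + q n) ^ 2) Filter.atTop (nhds 0) := by
    have h1 := ((tendsto_const_nhds (x := (1:ℝ))).sub hC)
    have h2 := (hC.div hql (by norm_num)).sub hC
    have := (h1.add h2).add hc2s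
    simpa using this
  apply squeeze_zero' (g := fun n =>
      (1 - (p n) ^ 3 * (q n) ^ 3 /
        (((p n) ^ (n - 1) / pqInt (p n) (q n) (n - 1) + q n) *
          ((p n) ^ n / pqInt (p n) (q n) n + q n) ^ 2)) +
      ((p n) ^ 3 * (q n) ^ 3 /
        (((p n) ^ (n - 1) / pqInt (p n) (q n) (n - 1) + q n) *
          ((p n) ^ n / pqInt (p n) (q n) n + q n) ^ 2) / q n -
        (p n) ^ 3 * (q n) ^ 3 /
        (((p n) ^ (n - 1) / pqInt (p n) (q n) (n - 1) + q n) *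
          ((p n) ^ n / pqInt (p n) (q n) n + q n) ^ 2)) +
      (p n) ^ 2 * q n * ((p n) ^ n / pqInt (p n) (q n) n) /
        ((p n) ^ n / pqInt (p n) (q n) n + q n) ^ 2)
  · exact Filter.Eventually.of_forall fun n => Real.iSup_nonneg fun x => abs_nonneg _
  · rw [Filter.eventually_atTop]
    refine ⟨2, fun n hn => ?_⟩
    obtain ⟨m, rfl⟩ : ∃ m, n = m + 2 := ⟨n - 2, by omega⟩
    have hb : ∀ x : {t : ℝ // 0 ≤ t},
        |bbh (p (m + 2)) (q (m + 2)) (m + 2) (fun t => (t / (1 + t)) ^ 2) x.1 -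
          (x.1 / (1 + x.1)) ^ 2|
        ≤ (1 - (p (m + 2)) ^ 3 * (q (m + 2)) ^ 3 * pqInt (p (m + 2)) (q (m + 2)) (m + 2) *
              pqInt (p (m + 2)) (q (m + 2)) (m + 1) /
              (pqInt (p (m + 2)) (q (m + 2)) (m + 3)) ^ 2) +
            ((p (m + 2)) ^ 3 * (q (m + 2)) ^ 3 * pqInt (p (m + 2)) (q (m + 2)) (m + 2) *
              pqInt (p (m + 2)) (q (m + 2)) (m + 1) /
              (pqInt (p (m + 2)) (q (m + 2)) (m + 3)) ^ 2 / q (m + 2) -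
              (p (m + 2)) ^ 3 * (q (m + 2)) ^ 3 * pqInt (p (m + 2)) (q (m + 2)) (m + 2) *
              pqInt (p (m + 2)) (q (m + 2)) (m + 1) /
              (pqInt (p (m + 2)) (q (m + 2)) (m + 3)) ^ 2) +
            (p (m + 2)) ^ (m + 4) * q (m + 2) * pqInt (p (m + 2)) (q (m + 2)) (m + 2) /
              (pqInt (p (m + 2)) (q (m + 2)) (m + 3)) ^ 2 :=
      fun x => bbh_e2_bound (hq (m + 2)) (hqp (m + 2)) (hp (m + 2)) m x.1 x.2
    refine le_trans (ciSup_le hb) (le_of_eq ?_)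
    rw [c1_eq (hq (m + 2)) (hqp (m + 2)) m, c2_eq (hq (m + 2)) (hqp (m + 2)) m,
      show m + 2 - 1 = m + 1 from rfl]
  · exact hβ

end Main

lemma statconv_aux (a : ℕ → ℝ) (ha : Filter.Tendsto a Filter.atTop (nhds 0)) :
    ∀ ε > (0 : ℝ), Filter.Tendsto (fun n : ℕ =>
      (((Finset.range (n + 1)).filter (fun k => ε ≤ |a k - 0|)).card : ℝ) / n)
      Filter.atTop (nhds 0) := by
  intro ε hε
  obtain ⟨N, hN⟩ := (Metric.tendsto_atTop.mp ha) ε hε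
  have hcard : ∀ n : ℕ,
      (((Finset.range (n + 1)).filter (fun k => ε ≤ |a k - 0|)).card : ℝ) ≤ N := by
    intro n
    have hsub : (Finset.range (n + 1)).filter (fun k => ε ≤ |a k - 0|) ⊆ Finset.range N := by
      intro k hk
      rw [Finset.mem_filter] at hk
      rw [Finset.mem_range]
      by_contra hkN
      have hge : N ≤ k := by omega
      have := hN k hge
      rw [Real.dist_eq] at this
      linarith [hk.2]
    have := Finset.card_le_card hsub
    rw [Finset.card_range] at this
    exact_mod_cast this
  apply squeeze_zero (g := fun n : ℕ => (N : ℝ) / n)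
  · intro n
    positivity
  · intro n
    rcases Nat.eq_zero_or_pos n with h0 | hpos
    · subst h0
      simp
    · have hn : (0:ℝ) < n := by exact_mod_cast hpos
      gcongr
      · exact_mod_cast hcard n
  · exact tendsto_const_div_atTop_nhds_zero_nat (N : ℝ)


/-- statistical convergence for the second test function. -/
theorem bbh_statConv_second_test (p q : ℕ → ℝ)
    (hq : ∀ n, 0 < q n) (hqp : ∀ n, q n < p n) (hp : ∀ n, p n ≤ 1)
    (hpl : Tendsto p atTop (nhds 1)) (hql : Tendsto q atTop (nhds 1)) :
    StatConv (fun n : ℕ =>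
      ⨆ x : {t : ℝ // 0 ≤ t},
        |bbh (p n) (q n) n (fun t => (t / (1 + t)) ^ 2) x.1 -
          (x.1 / (1 + x.1)) ^ 2|) 0 := by
  intro ε hε
  exact statconv_aux _ (tendsto_a_zero p q hq hqp hp hpl hql) ε hε
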